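/- Let (X,c) be a metric space, V_1 ⊆ X finite and even, O_1 a min-cost perfect matching on V_1, and k ∈ ℕ. Let P_1,…,P_k be edge-disjoint O_1-alternating paths each starting and ending with an O_1-edge, maximizing the total gain Σ g_{O_1}(P_i), and let M̄ := O_1 Δ P_1 Δ … Δ P_k and M_1 := M̄ ∪ {e(P_i) : i ∈ [k]} where e(P_i) joins the endpoints of P_i. Then c(M_1) ≤ 3·c(O_1). -/

import Mathlib

open scoped Classical

/-- The list of edges of the path visiting the vertices of `l` in order. -/
def edgeList {V : Type*} (l : List V) : List (Sym2 V) :=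
  l.zipWith (fun a b => s(a, b)) l.tail

/-- The cost of an edge in a metric space: the distance between its endpoints. -/
noncomputable def edgeCost {V : Type*} [MetricSpace V] (e : Sym2 V) : ℝ :=
  Sym2.lift ⟨dist, fun a b => dist_comm a b⟩ e

/-- The total cost of a finite set of edges. -/
noncomputable def setCost {V : Type*} [MetricSpace V] (S : Finset (Sym2 V)) : ℝ :=
  ∑ e ∈ S, edgeCost e

/-- A list of edges is `M`-alternating if consecutive edges alternate between membership
and non-membership in `M`. -/
def IsAlt {V : Type*} (M : Set (Sym2 V)) (es : List (Sym2 V)) : Prop :=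
  ∀ (i : ℕ) (h : i + 1 < es.length),
    (es[i]'(Nat.lt_of_succ_lt h) ∈ M ↔ es[i + 1]'h ∉ M)

/-- The gain `g_M` of a list of edges. -/
noncomputable def gainL {V : Type*} [MetricSpace V] (M : Set (Sym2 V))
    (es : List (Sym2 V)) : ℝ :=
  (es.map (fun e => if e ∈ M then edgeCost e else -edgeCost e)).sum

/-- `M` is a perfect matching on the finite point set `S`. -/
def IsPM {V : Type*} (M : Finset (Sym2 V)) (S : Finset V) : Prop :=
  (∀ e ∈ M, ¬ e.IsDiag) ∧ (∀ e ∈ M, ∀ x ∈ e, x ∈ S) ∧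
  (∀ x ∈ S, ∃! e, e ∈ M ∧ x ∈ e)

section helpers
variable {V : Type*}

lemma edgeCost_mk [MetricSpace V] (x y : V) : edgeCost s(x, y) = dist x y := rfl

lemma edgeCost_nonneg [MetricSpace V] (e : Sym2 V) : 0 ≤ edgeCost e := by
  induction e using Sym2.ind with
  | _ x y => exact dist_nonneg

lemma setCost_nonneg [MetricSpace V] (S : Finset (Sym2 V)) : 0 ≤ setCost S :=
  Finset.sum_nonneg fun e _ => edgeCost_nonneg e

lemma setCost_mono [MetricSpace V] {S T : Finset (Sym2 V)} (h : S ⊆ T) :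
    setCost S ≤ setCost T :=
  Finset.sum_le_sum_of_subset_of_nonneg h fun e _ _ => edgeCost_nonneg e

lemma setCost_union_le [MetricSpace V] [DecidableEq V] (S T : Finset (Sym2 V)) :
    setCost (S ∪ T) ≤ setCost S + setCost T := by
  have h1 : setCost (S ∪ T) = setCost S + setCost (T \ S) := by
    rw [show S ∪ T = S ∪ (T \ S) by simp, setCost, Finset.sum_union Finset.disjoint_sdiff]
    rfl
  have := setCost_mono (Finset.sdiff_subset : T \ S ⊆ T)
  linarith

lemma edgeList_cons (x y : V) (t : List V) :
    edgeList (x :: y :: t) = s(x, y) :: edgeList (y :: t) := rfl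

lemma mem_of_mem_edgeList {l : List V} {e : Sym2 V} (he : e ∈ edgeList l) :
    ∀ v ∈ e, v ∈ l := by
  induction l with
  | nil => simp [edgeList] at he
  | cons x t ih =>
    cases t with
    | nil => simp [edgeList] at he
    | cons y t' =>
      rw [edgeList_cons] at he
      rcases List.mem_cons.1 he with h | h
      · subst h
        intro v hv
        rcases Sym2.mem_iff.1 hv with rfl | rfl
        · exact List.mem_cons_self
        · exact List.mem_cons_of_mem _ List.mem_cons_self
      · intro v hv
        exact List.mem_cons_of_mem _ (ih h v hv)

lemma edgeList_nodup {l : List V} (h : l.Nodup) : (edgeList l).Nodup := by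
  induction l with
  | nil => simp [edgeList]
  | cons x t ih =>
    cases t with
    | nil => simp [edgeList]
    | cons y t' =>
      rw [edgeList_cons]
      refine List.nodup_cons.2 ⟨?_, ih (List.nodup_cons.1 h).2⟩
      intro hmem
      have hx : x ∈ y :: t' := mem_of_mem_edgeList hmem x (by simp)
      exact (List.nodup_cons.1 h).1 hx

lemma dist_le_edgeSum [MetricSpace V] :
    ∀ (l : List V) (x y : V), l.head? = some x → l.getLast? = some y →
      dist x y ≤ ((edgeList l).map edgeCost).sum := by
  intro l
  induction l with
  | nil => intro x y h; simp at h
  | cons z t ih =>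
    intro x y h1 h2
    cases t with
    | nil =>
      simp at h1 h2
      subst h1; subst h2
      simp [edgeList]
    | cons w t' =>
      have hx : x = z := by simpa using h1.symm
      subst hx
      have h2' : (w :: t').getLast? = some y := by
        rwa [List.getLast?_cons_cons] at h2
      have := ih w y rfl h2'
      rw [edgeList_cons, List.map_cons, List.sum_cons, edgeCost_mk]
      calc dist x y ≤ dist x w + dist w y := dist_triangle _ _ _
        _ ≤ dist x w + ((edgeList (w :: t')).map edgeCost).sum := by linarith

lemma sum_image_le {ι α : Type*} [DecidableEq α] (s : Finset ι) (f : ι → α)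
    (g : α → ℝ) (hg : ∀ a, 0 ≤ g a) :
    ∑ e ∈ s.image f, g e ≤ ∑ i ∈ s, g (f i) := by
  classical
  induction s using Finset.induction with
  | empty => simp
  | @insert a s ha ih =>
    rw [Finset.image_insert, Finset.sum_insert ha]
    by_cases hfa : f a ∈ s.image f
    · rw [Finset.insert_eq_self.2 hfa]
      exact le_trans ih (le_add_of_nonneg_left (hg _))
    · rw [Finset.sum_insert hfa]
      linarith

lemma not_isDiag_exists {e : Sym2 V} (h : ¬ e.IsDiag) : ∃ x y : V, x ≠ y ∧ e = s(x, y) := by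
  induction e using Sym2.ind with
  | _ u v => exact ⟨u, v, by simpa [Sym2.mk_isDiag_iff] using h, rfl⟩

end helpers

set_option maxHeartbeats 1600000

/-- Let `O₁` be a min-cost perfect matching on an even set `V₁` of points in
a metric space, and let `p 1, …, p k` be edge-disjoint `O₁`-alternating paths, each starting
and ending with an `O₁`-edge, which maximize the total gain `Σᵢ g_{O₁}(p i)`.  Let
`M̄ = O₁ Δ p 1 Δ … Δ p k` and `M₁ = M̄ ∪ {e(p i) : i}`, where `e(p i)` joins the endpoints
`a i`, `b i` of `p i`.  Then `c(M₁) ≤ 3·c(O₁)`. -/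
theorem stmt19 {V : Type*} [MetricSpace V] [DecidableEq V]
    (V₁ : Finset V) (hEven : Even V₁.card)
    (O₁ : Finset (Sym2 V)) (hO₁ : IsPM O₁ V₁)
    (hO₁min : ∀ M, IsPM M V₁ → setCost O₁ ≤ setCost M)
    (k : ℕ) (p : Fin k → List V)
    (hnodup : ∀ i, (p i).Nodup)
    (hne : ∀ i, edgeList (p i) ≠ [])
    (halt : ∀ i, IsAlt (↑O₁) (edgeList (p i)))
    (hbound : ∀ i (h : edgeList (p i) ≠ []),
      (edgeList (p i)).head h ∈ O₁ ∧ (edgeList (p i)).getLast h ∈ O₁)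
    (hdisj : ∀ i j, i ≠ j → Disjoint (edgeList (p i)).toFinset (edgeList (p j)).toFinset)
    (hmax : ∀ q : Fin k → List V, (∀ i, (q i).Nodup) → (∀ i, edgeList (q i) ≠ []) →
      (∀ i, IsAlt (↑O₁) (edgeList (q i))) →
      (∀ i (h : edgeList (q i) ≠ []),
        (edgeList (q i)).head h ∈ O₁ ∧ (edgeList (q i)).getLast h ∈ O₁) →
      (∀ i j, i ≠ j → Disjoint (edgeList (q i)).toFinset (edgeList (q j)).toFinset) →
      ∑ i, gainL (↑O₁) (edgeList (q i)) ≤ ∑ i, gainL (↑O₁) (edgeList (p i)))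
    (a b : Fin k → V)
    (hab : ∀ i, (p i).head? = some (a i) ∧ (p i).getLast? = some (b i))
    (Mbar M₁ : Finset (Sym2 V))
    (hMbar : Mbar = symmDiff O₁ (Finset.univ.biUnion (fun i => (edgeList (p i)).toFinset)))
    (hM₁ : M₁ = Mbar ∪ Finset.univ.image (fun i => s(a i, b i))) :
    setCost M₁ ≤ 3 * setCost O₁ := by
  classical
  set U : Finset (Sym2 V) := Finset.univ.biUnion (fun i => (edgeList (p i)).toFinset)
    with hUdef
  have hnde : ∀ i, (edgeList (p i)).Nodup := fun i => edgeList_nodup (hnodup i)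
  have hpd : (↑(Finset.univ : Finset (Fin k)) : Set (Fin k)).PairwiseDisjoint
      (fun i => (edgeList (p i)).toFinset) := fun i _ j _ hij => hdisj i j hij
  -- the total gain expressed as a sum over U
  have hgf : ∑ i, gainL (↑O₁) (edgeList (p i))
      = ∑ e ∈ U, (if e ∈ O₁ then edgeCost e else -edgeCost e) := by
    rw [hUdef, Finset.sum_biUnion hpd]
    refine Finset.sum_congr rfl fun i _ => ?_
    rw [List.sum_toFinset _ (hnde i)]
    simp [gainL]
  have hsplit : ∑ e ∈ U, (if e ∈ O₁ then edgeCost e else -edgeCost e)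
      = setCost (U ∩ O₁) - setCost (U \ O₁) := by
    rw [Finset.sum_ite, Finset.filter_mem_eq_inter, setCost, setCost,
      Finset.sdiff_eq_filter]
    rw [Finset.sum_neg_distrib, sub_eq_add_neg]
  -- cost of Mbar
  have hMbarCost : setCost Mbar = setCost O₁ - setCost (U ∩ O₁) + setCost (U \ O₁) := by
    rw [hMbar, symmDiff_def, setCost, Finset.sup_eq_union,
      Finset.sum_union disjoint_sdiff_sdiff]
    have h2 := Finset.sum_sdiff (f := edgeCost) (Finset.inter_subset_left (s₁ := O₁) (s₂ := U))
    rw [Finset.sdiff_inter_self_left] at h2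
    have h3 : (O₁ ∩ U) = (U ∩ O₁) := Finset.inter_comm _ _
    rw [h3] at h2
    simp only [setCost] at *
    linarith
  have hUsplit : setCost (U ∩ O₁) + setCost (U \ O₁) = setCost U :=
    Finset.sum_inter_add_sum_sdiff _ _ _
  -- nonnegativity of the total gain, via maximality
  have hex : ∀ i : Fin k, ∃ x y : V, x ≠ y ∧ (edgeList (p i)).head (hne i) = s(x, y) :=
    fun i => not_isDiag_exists (hO₁.1 _ (hbound i (hne i)).1)
  choose xx yy hxy hhead using hex
  have hqe : ∀ i, edgeList [xx i, yy i] = [(edgeList (p i)).head (hne i)] := by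
    intro i
    rw [show edgeList [xx i, yy i] = [s(xx i, yy i)] from rfl, ← hhead i]
  have hheadO : ∀ i, (edgeList (p i)).head (hne i) ∈ O₁ := fun i => (hbound i (hne i)).1
  have hheadmem : ∀ i, (edgeList (p i)).head (hne i) ∈ (edgeList (p i)).toFinset :=
    fun i => List.mem_toFinset.2 (List.head_mem _)
  have h1 := hmax (fun i => [xx i, yy i])
    (fun i => by simp [List.nodup_cons, hxy i])
    (fun i => by rw [hqe i]; simp)
    (fun i => by rw [show edgeList [xx i, yy i] = [s(xx i, yy i)] from rfl]
                 intro n hn; simp at hn)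
    (fun i h => by
      constructor <;> · simp only [hqe i, List.head_cons, List.getLast_singleton]
                        exact hheadO i)
    (fun i j hij => by
      rw [hqe i, hqe j]
      simp only [List.toFinset_cons, List.toFinset_nil, insert_empty_eq]
      rw [Finset.disjoint_singleton]
      intro heq
      apply Finset.disjoint_left.1 (hdisj i j hij) (hheadmem i)
      rw [heq]; exact hheadmem j)
  have hgain : 0 ≤ ∑ i, gainL (↑O₁) (edgeList (p i)) := by
    refine le_trans ?_ h1
    refine Finset.sum_nonneg fun i _ => ?_
    rw [hqe i]
    simp [gainL, hheadO i, edgeCost_nonneg]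
  -- triangle inequality for the endpoint edges
  have htri : ∀ i, edgeCost s(a i, b i) ≤ setCost (edgeList (p i)).toFinset := by
    intro i
    rw [edgeCost_mk, setCost, List.sum_toFinset _ (hnde i)]
    exact dist_le_edgeSum (p i) (a i) (b i) (hab i).1 (hab i).2
  have hM1le : setCost M₁ ≤ setCost Mbar + ∑ i, edgeCost s(a i, b i) := by
    rw [hM₁]
    refine le_trans (setCost_union_le _ _) ?_
    have h := sum_image_le Finset.univ (fun i => s(a i, b i)) edgeCost edgeCost_nonneg
    exact add_le_add_right h _
  have hsum_paths : ∑ i, edgeCost s(a i, b i) ≤ setCost U := by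
    calc ∑ i, edgeCost s(a i, b i) ≤ ∑ i, setCost (edgeList (p i)).toFinset :=
          Finset.sum_le_sum fun i _ => htri i
      _ = setCost U := by rw [hUdef, setCost, Finset.sum_biUnion hpd]; simp [setCost]
  have hsub : U \ O₁ ⊆ Mbar := by
    rw [hMbar]
    intro e he
    rw [Finset.mem_symmDiff]
    exact Or.inr ⟨(Finset.mem_sdiff.1 he).1, (Finset.mem_sdiff.1 he).2⟩
  have h5 : setCost (U \ O₁) ≤ setCost Mbar := setCost_mono hsub
  have h6 : setCost (U ∩ O₁) ≤ setCost O₁ := setCost_mono Finset.inter_subset_right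
  linarith
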